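/- Let Γ = Cay(V, S) be a cubelike graph on V = 𝔽₂^m with 0 ∉ S, let a, b, c, d ∈ V with a + b ∈ S, c + d ∈ S, b ≠ c, a ≠ d, c ≠ a, and a + b + c + d = 0, and suppose Γ has PEST from the edge (a,b) to the edge (c,d) at some positive time. Fix x₀ ∈ Ω₊ and let M = gcd{λ_{x₀} − λ_x : x ∈ V, (a+b)·x = 1, x ≠ x₀}. Then for every t > 0, Γ has PEST from (a,b) to (c,d) at time t if and only if t = (2u+1)π/M for some non-negative integer u. -/

import Mathlib

open Matrix Finset

noncomputable section

/-- The adjacency matrix of the Cayley (cubelike) graph `Cay(G, S)`. -/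
def adjMatrix {G : Type*} [AddCommGroup G] [Fintype G] [DecidableEq G]
    (S : Finset G) : Matrix G G ℂ :=
  fun u v => if u + v ∈ S then 1 else 0

/-- The transfer matrix `H(t) = exp(i t A)`. -/
def transferMatrix {G : Type*} [AddCommGroup G] [Fintype G] [DecidableEq G]
    (S : Finset G) (t : ℝ) : Matrix G G ℂ :=
  NormedSpace.exp (Complex.I • ((t : ℂ) • adjMatrix S))

/-- The standard basis vector `e_a` of `ℂ^V`. -/
def stdBasis {G : Type*} [DecidableEq G] (a : G) : G → ℂ :=
  fun v => if v = a then 1 else 0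

/-- Perfect edge state transfer from the edge `(a,b)` to the edge `(c,d)` at time `t`:
`|(1/2)(e_c - e_d)ᵀ H(t)(e_a - e_b)|² = 1`. -/
def hasPEST {G : Type*} [AddCommGroup G] [Fintype G] [DecidableEq G]
    (S : Finset G) (a b c d : G) (t : ℝ) : Prop :=
  ‖(1 / 2 : ℂ) * dotProduct (stdBasis c - stdBasis d)
      (transferMatrix S t *ᵥ (stdBasis a - stdBasis b))‖ ^ 2 = 1

/-- The eigenvalue `λ_x = ∑_{s ∈ S} (-1)^{x·s}` of a cubelike graph. -/
def lam {m : ℕ} (S : Finset (Fin m → ZMod 2)) (x : Fin m → ZMod 2) : ℤ :=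
  ∑ s ∈ S, (-1) ^ (x ⬝ᵥ s).val

namespace PESTaux

def chi (u : ZMod 2) : ℂ := (-1 : ℂ) ^ u.val

lemma zmod2_cases (u : ZMod 2) : u = 0 ∨ u = 1 := by revert u; decide

lemma chi_zero : chi 0 = 1 := by simp [chi]

lemma chi_one : chi 1 = -1 := by
  have : (1 : ZMod 2).val = 1 := rfl
  simp [chi, this]

lemma chi_add (u v : ZMod 2) : chi (u + v) = chi u * chi v := by
  rcases zmod2_cases u with rfl | rfl <;> rcases zmod2_cases v with rfl | rfl <;>
    simp [chi_zero, chi_one, (by decide : (1 + 1 : ZMod 2) = 0)]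

lemma chi_mul_self (u : ZMod 2) : chi u * chi u = 1 := by
  rcases zmod2_cases u with rfl | rfl <;> norm_num [chi_zero, chi_one]

lemma addself {m : ℕ} (w : Fin m → ZMod 2) : w + w = 0 := by
  funext i
  have : ∀ u : ZMod 2, u + u = 0 := by decide
  exact this (w i)

lemma addself_iff {m : ℕ} (u v : Fin m → ZMod 2) : u + v = 0 ↔ u = v := by
  constructor
  · intro h
    have := congrArg (· + v) h
    simpa [add_assoc, addself] using this
  · rintro rfl; exact addself u

lemma card_V (m : ℕ) : Fintype.card (Fin m → ZMod 2) = 2 ^ m := by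
  simp [ZMod.card]

lemma chi_sum_eq {m : ℕ} (y : Fin m → ZMod 2) :
    ∑ x : Fin m → ZMod 2, chi (x ⬝ᵥ y) = if y = 0 then ((2 : ℂ)) ^ m else 0 := by
  split_ifs with h
  · subst h
    simp only [dotProduct_zero, chi_zero, Finset.sum_const, card_univ, card_V, nsmul_eq_mul,
      mul_one]
    push_cast
    ring
  · obtain ⟨j, hj⟩ : ∃ j, y j ≠ 0 := by
      by_contra hc
      push_neg at hc
      exact h (funext hc)
    have hj1 : y j = 1 := (zmod2_cases (y j)).resolve_left hj
    refine Finset.sum_ninvolution (fun x => x + Pi.single j 1) ?_ ?_ (fun _ => Finset.mem_univ _) ?_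
    · intro x
      have : (x + Pi.single j 1) ⬝ᵥ y = x ⬝ᵥ y + 1 := by
        rw [add_dotProduct, single_dotProduct, hj1, mul_one]
      rw [this, chi_add, chi_one]
      ring
    · intro x _
      intro hx
      have := congrFun hx j
      simp at this
    · intro x
      show x + Pi.single j 1 + Pi.single j 1 = x
      rw [add_assoc, ← Pi.single_add, (by decide : (1 + 1 : ZMod 2) = 0), Pi.single_zero,
        add_zero]

/-- the character (Hadamard) matrix -/
def Umat (m : ℕ) : Matrix (Fin m → ZMod 2) (Fin m → ZMod 2) ℂ :=
  Matrix.of fun x v => chi (x ⬝ᵥ v)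

lemma two_pow_ne (m : ℕ) : ((2 : ℂ)) ^ m ≠ 0 := pow_ne_zero _ two_ne_zero

lemma Umat_mul_Umat (m : ℕ) : Umat m * Umat m = ((2 : ℂ) ^ m) • 1 := by
  ext u v
  simp only [Matrix.mul_apply, Umat, Matrix.of_apply, Matrix.smul_apply, Matrix.one_apply]
  have : ∀ x : Fin m → ZMod 2, chi (u ⬝ᵥ x) * chi (x ⬝ᵥ v) = chi (x ⬝ᵥ (u + v)) := by
    intro x
    rw [dotProduct_comm u x, ← chi_add, ← dotProduct_add]
  rw [Finset.sum_congr rfl (fun x _ => this x), chi_sum_eq]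
  by_cases h : u = v
  · subst h; rw [if_pos (addself u), if_pos rfl]; simp
  · rw [if_neg (fun hc => h ((addself_iff u v).1 hc)), if_neg h]; simp

lemma Umat_right_inv (m : ℕ) : Umat m * (((2 : ℂ) ^ m)⁻¹ • Umat m) = 1 := by
  rw [Matrix.mul_smul, Umat_mul_Umat, smul_smul, inv_mul_cancel₀ (two_pow_ne m), one_smul]

lemma Umat_isUnit (m : ℕ) : IsUnit (Umat m) := by
  refine ⟨⟨Umat m, ((2 : ℂ) ^ m)⁻¹ • Umat m, Umat_right_inv m, ?_⟩, rfl⟩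
  rw [Matrix.smul_mul, Umat_mul_Umat, smul_smul, inv_mul_cancel₀ (two_pow_ne m), one_smul]

lemma Umat_inv (m : ℕ) : (Umat m)⁻¹ = ((2 : ℂ) ^ m)⁻¹ • Umat m :=
  Matrix.inv_eq_right_inv (Umat_right_inv m)

lemma lam_cast {m : ℕ} (S : Finset (Fin m → ZMod 2)) (x : Fin m → ZMod 2) :
    ((lam S x : ℤ) : ℂ) = ∑ s ∈ S, chi (x ⬝ᵥ s) := by
  unfold lam chi
  push_cast
  rfl

lemma adj_diag {m : ℕ} (S : Finset (Fin m → ZMod 2)) (t : ℝ) :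
    Complex.I • ((t : ℂ) • adjMatrix S) =
      Umat m * Matrix.diagonal (fun x => Complex.I * t * (lam S x : ℂ)) * (Umat m)⁻¹ := by
  rw [Umat_inv, mul_assoc]
  ext u v
  rw [Matrix.mul_apply]
  have e1 : ∀ x : Fin m → ZMod 2,
      Umat m u x * ((Matrix.diagonal (fun x => Complex.I * t * (lam S x : ℂ)) *
        (((2:ℂ)^m)⁻¹ • Umat m)) x v)
      = Complex.I * t * ((2:ℂ)^m)⁻¹ * (((lam S x : ℤ) : ℂ) * chi (x ⬝ᵥ (u + v))) := by
    intro x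
    rw [Matrix.diagonal_mul]
    simp only [Matrix.smul_apply, smul_eq_mul, Umat, Matrix.of_apply]
    rw [dotProduct_comm u x]
    have hc : chi (x ⬝ᵥ u) * chi (x ⬝ᵥ v) = chi (x ⬝ᵥ (u + v)) := by
      rw [← chi_add, ← dotProduct_add]
    rw [← hc]
    push_cast
    ring
  rw [Finset.sum_congr rfl (fun x _ => e1 x), ← Finset.mul_sum]
  have hsum : ∑ x : Fin m → ZMod 2, ((lam S x : ℤ) : ℂ) * chi (x ⬝ᵥ (u + v)) =
      (2:ℂ)^m * (if u + v ∈ S then 1 else 0) := by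
    have h1 : ∀ x : Fin m → ZMod 2, ((lam S x : ℤ) : ℂ) * chi (x ⬝ᵥ (u + v)) =
        ∑ s ∈ S, chi (x ⬝ᵥ (s + (u + v))) := by
      intro x
      rw [lam_cast, Finset.sum_mul]
      refine Finset.sum_congr rfl fun s _ => ?_
      rw [← chi_add, ← dotProduct_add]
    rw [Finset.sum_congr rfl (fun x _ => h1 x), Finset.sum_comm]
    have h2 : ∀ s : Fin m → ZMod 2, ∑ x : Fin m → ZMod 2, chi (x ⬝ᵥ (s + (u + v))) =
        if s = u + v then (2:ℂ)^m else 0 := by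
      intro s
      rw [chi_sum_eq]
      by_cases h : s = u + v
      · rw [if_pos (by rw [h]; exact addself _), if_pos h]
      · rw [if_neg (fun hc => h ((addself_iff _ _).1 hc)), if_neg h]
    rw [Finset.sum_congr rfl (fun s _ => h2 s), Finset.sum_ite_eq' S (u + v) (fun _ => (2:ℂ)^m)]
    split_ifs <;> ring
  rw [hsum]
  simp only [Matrix.smul_apply, smul_eq_mul]
  unfold adjMatrix
  have h2m := two_pow_ne m
  field_simp

lemma transfer_apply {m : ℕ} (S : Finset (Fin m → ZMod 2)) (t : ℝ) (u v : Fin m → ZMod 2) :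
    transferMatrix S t u v =
      ((2:ℂ)^m)⁻¹ * ∑ x : Fin m → ZMod 2,
        Complex.exp (Complex.I * t * (lam S x : ℂ)) * chi (x ⬝ᵥ (u + v)) := by
  unfold transferMatrix
  rw [adj_diag S t, Matrix.exp_conj _ _ (Umat_isUnit m), Matrix.exp_diagonal]
  have hpi : (NormedSpace.exp fun x : Fin m → ZMod 2 => Complex.I * t * (lam S x : ℂ)) =
      fun x => Complex.exp (Complex.I * t * (lam S x : ℂ)) := by
    rw [Pi.exp_def, Complex.exp_eq_exp_ℂ]
  rw [hpi, Umat_inv, mul_assoc, Matrix.mul_apply]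
  have e1 : ∀ x : Fin m → ZMod 2,
      Umat m u x * ((Matrix.diagonal (fun x => Complex.exp (Complex.I * t * (lam S x : ℂ))) *
        (((2:ℂ)^m)⁻¹ • Umat m)) x v)
      = ((2:ℂ)^m)⁻¹ * (Complex.exp (Complex.I * t * (lam S x : ℂ)) * chi (x ⬝ᵥ (u + v))) := by
    intro x
    rw [Matrix.diagonal_mul]
    simp only [Matrix.smul_apply, smul_eq_mul, Umat, Matrix.of_apply]
    rw [dotProduct_comm u x]
    have hc : chi (x ⬝ᵥ u) * chi (x ⬝ᵥ v) = chi (x ⬝ᵥ (u + v)) := by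
      rw [← chi_add, ← dotProduct_add]
    rw [← hc]
    ring
  rw [Finset.sum_congr rfl (fun x _ => e1 x), ← Finset.mul_sum]

lemma amp {m : ℕ} (S : Finset (Fin m → ZMod 2)) (t : ℝ) (a b c d : Fin m → ZMod 2)
    (hsum : a + b + c + d = 0) :
    (1/2 : ℂ) * dotProduct (stdBasis c - stdBasis d)
        (transferMatrix S t *ᵥ (stdBasis a - stdBasis b)) =
      ((2:ℂ)^m)⁻¹ * 2 * ∑ x ∈ univ.filter (fun x : Fin m → ZMod 2 => (a + b) ⬝ᵥ x = 1),
        chi ((c + a) ⬝ᵥ x) * Complex.exp (Complex.I * t * (lam S x : ℂ)) := by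
  have hd : d = a + b + c := by
    calc d = 0 + d := (zero_add d).symm
    _ = ((a+b+c) + (a+b+c)) + d := by rw [addself]
    _ = (a+b+c) + ((a+b+c) + d) := add_assoc _ _ _
    _ = (a+b+c) + 0 := by rw [hsum]
    _ = a+b+c := add_zero _
  subst hd
  have hF : dotProduct (stdBasis c - stdBasis (a+b+c))
      (transferMatrix S t *ᵥ (stdBasis a - stdBasis b)) =
      transferMatrix S t c a - transferMatrix S t c b
        - transferMatrix S t (a+b+c) a + transferMatrix S t (a+b+c) b := by
    simp only [dotProduct, Matrix.mulVec, _root_.stdBasis, Pi.sub_apply, sub_mul, mul_sub,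
      Finset.sum_sub_distrib, ite_mul, one_mul, zero_mul, mul_ite, mul_one, mul_zero]
    simp only [dotProduct, Finset.sum_ite_eq', Finset.mem_univ, if_true]
    ring
  rw [hF]
  rw [transfer_apply, transfer_apply, transfer_apply, transfer_apply]
  have key : ∀ x : Fin m → ZMod 2,
      Complex.exp (Complex.I * t * (lam S x : ℂ)) * chi (x ⬝ᵥ (c+a))
      - Complex.exp (Complex.I * t * (lam S x : ℂ)) * chi (x ⬝ᵥ (c+b))
      - Complex.exp (Complex.I * t * (lam S x : ℂ)) * chi (x ⬝ᵥ ((a+b+c)+a))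
      + Complex.exp (Complex.I * t * (lam S x : ℂ)) * chi (x ⬝ᵥ ((a+b+c)+b))
      = if (a + b) ⬝ᵥ x = 1 then
          4 * (chi ((c + a) ⬝ᵥ x) * Complex.exp (Complex.I * t * (lam S x : ℂ))) else 0 := by
    intro x
    have h1 : (a+b+c)+a = c+b := by
      calc (a+b+c)+a = (a+a) + (b+c) := by abel
      _ = c + b := by rw [addself, zero_add, add_comm]
    have h2 : (a+b+c)+b = c+a := by
      calc (a+b+c)+b = (b+b) + (a+c) := by abel
      _ = c + a := by rw [addself, zero_add, add_comm]
    rw [h1, h2]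
    have h3 : chi (x ⬝ᵥ (c+b)) = chi (x ⬝ᵥ (c+a)) * chi (x ⬝ᵥ (a+b)) := by
      rw [← chi_add, ← dotProduct_add]
      congr 2
      refine (calc c+a+(a+b) = (a+a) + (c+b) := by abel
      _ = c + b := by rw [addself, zero_add]).symm
    rw [h3, dotProduct_comm x (c+a), dotProduct_comm x (a+b)]
    rcases zmod2_cases ((a+b) ⬝ᵥ x) with h | h <;> rw [h]
    · rw [if_neg (by decide), chi_zero]
      ring
    · rw [if_pos rfl, chi_one]
      ring
  have hcomb : ∀ x : Fin m → ZMod 2, True := fun _ => trivial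
  clear hcomb
  rw [show
    (2^m:ℂ)⁻¹ * ∑ x : Fin m → ZMod 2,
        Complex.exp (Complex.I * t * (lam S x : ℂ)) * chi (x ⬝ᵥ (c+a))
      - (2^m:ℂ)⁻¹ * ∑ x : Fin m → ZMod 2,
        Complex.exp (Complex.I * t * (lam S x : ℂ)) * chi (x ⬝ᵥ (c+b))
      - (2^m:ℂ)⁻¹ * ∑ x : Fin m → ZMod 2,
        Complex.exp (Complex.I * t * (lam S x : ℂ)) * chi (x ⬝ᵥ ((a+b+c)+a))
      + (2^m:ℂ)⁻¹ * ∑ x : Fin m → ZMod 2,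
        Complex.exp (Complex.I * t * (lam S x : ℂ)) * chi (x ⬝ᵥ ((a+b+c)+b))
    = (2^m:ℂ)⁻¹ * ∑ x : Fin m → ZMod 2,
        (Complex.exp (Complex.I * t * (lam S x : ℂ)) * chi (x ⬝ᵥ (c+a))
        - Complex.exp (Complex.I * t * (lam S x : ℂ)) * chi (x ⬝ᵥ (c+b))
        - Complex.exp (Complex.I * t * (lam S x : ℂ)) * chi (x ⬝ᵥ ((a+b+c)+a))
        + Complex.exp (Complex.I * t * (lam S x : ℂ)) * chi (x ⬝ᵥ ((a+b+c)+b)))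
    from by rw [Finset.sum_add_distrib, Finset.sum_sub_distrib, Finset.sum_sub_distrib]; ring]
  rw [Finset.sum_congr rfl (fun x _ => key x), ← Finset.sum_filter]
  simp only [Finset.mul_sum]
  refine Finset.sum_congr rfl fun x hx => ?_
  ring

lemma exists_dot_one {m : ℕ} {p : Fin m → ZMod 2} (hp : p ≠ 0) : ∃ y, p ⬝ᵥ y = 1 := by
  obtain ⟨i, hi⟩ : ∃ i, p i ≠ 0 := by
    by_contra hc; push_neg at hc; exact hp (funext hc)
  exact ⟨Pi.single i 1, by
    rw [dotProduct_single, (zmod2_cases (p i)).resolve_left hi, one_mul]⟩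

lemma exists_dot_one_one {m : ℕ} {p q : Fin m → ZMod 2} (hp : p ≠ 0) (hq : q ≠ 0) :
    ∃ y, p ⬝ᵥ y = 1 ∧ q ⬝ᵥ y = 1 := by
  obtain ⟨i, hi⟩ : ∃ i, p i = 1 := by
    by_contra hc; push_neg at hc
    exact hp (funext fun i => (zmod2_cases (p i)).resolve_right (hc i))
  obtain ⟨j, hj⟩ : ∃ j, q j = 1 := by
    by_contra hc; push_neg at hc
    exact hq (funext fun j => (zmod2_cases (q j)).resolve_right (hc j))
  rcases zmod2_cases (q i) with hqi | hqi
  · rcases zmod2_cases (p j) with hpj | hpj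
    · refine ⟨Pi.single i 1 + Pi.single j 1, ?_, ?_⟩ <;>
        rw [dotProduct_add, dotProduct_single, dotProduct_single]
      · rw [hi, hpj]; decide
      · rw [hqi, hj]; decide
    · exact ⟨Pi.single j 1, by rw [dotProduct_single, hpj, one_mul],
        by rw [dotProduct_single, hj, one_mul]⟩
  · exact ⟨Pi.single i 1, by rw [dotProduct_single, hi, one_mul],
      by rw [dotProduct_single, hqi, one_mul]⟩

lemma card_T {m : ℕ} {p : Fin m → ZMod 2} (hp : p ≠ 0) :
    2 * (univ.filter fun x : Fin m → ZMod 2 => p ⬝ᵥ x = 1).card = 2 ^ m := by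
  obtain ⟨y₀, hy₀⟩ := exists_dot_one hp
  have hbij : (univ.filter fun x : Fin m → ZMod 2 => p ⬝ᵥ x = 1).card =
      (univ.filter fun x : Fin m → ZMod 2 => ¬(p ⬝ᵥ x = 1)).card := by
    refine Finset.card_bij' (fun x _ => x + y₀) (fun x _ => x + y₀) ?_ ?_ ?_ ?_
    · intro x hx
      simp only [Finset.mem_filter, Finset.mem_univ, true_and] at hx ⊢
      rw [dotProduct_add, hx, hy₀]
      decide
    · intro x hx
      simp only [Finset.mem_filter, Finset.mem_univ, true_and] at hx ⊢
      rw [dotProduct_add, hy₀]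
      rcases zmod2_cases (p ⬝ᵥ x) with h | h
      · rw [h]; decide
      · exact absurd h hx
    · intro x _; show x + y₀ + y₀ = x; rw [add_assoc, addself, add_zero]
    · intro x _; show x + y₀ + y₀ = x; rw [add_assoc, addself, add_zero]
  have h2 := Finset.card_filter_add_card_filter_not
    (s := (univ : Finset (Fin m → ZMod 2))) (p := fun x => p ⬝ᵥ x = 1)
  rw [Finset.card_univ, card_V] at h2
  omega

lemma abs_sum_eq_card_iff {α : Type*} [DecidableEq α] (s : Finset α) (w : α → ℂ)
    (hw : ∀ x ∈ s, ‖w x‖ = 1) (x₀ : α) (hx : x₀ ∈ s) :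
    ‖∑ x ∈ s, w x‖ = s.card ↔ ∀ x ∈ s, w x = w x₀ := by
  constructor
  · intro h
    have hns : ∀ x ∈ s, Complex.normSq (w x) = 1 := by
      intro x hxs
      rw [← Complex.sq_norm, hw x hxs, one_pow]
    have hZ : Complex.normSq (∑ x ∈ s, w x) = (s.card : ℝ)^2 := by
      rw [← Complex.sq_norm, h]
    have hre : ∑ x ∈ s, ∑ y ∈ s, ((w x) * (starRingEnd ℂ) (w y)).re = (s.card : ℝ)^2 := by
      have : ∑ x ∈ s, ∑ y ∈ s, ((w x) * (starRingEnd ℂ) (w y)) =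
          (∑ x ∈ s, w x) * (starRingEnd ℂ) (∑ x ∈ s, w x) := by
        rw [map_sum, Finset.sum_mul_sum]
      calc ∑ x ∈ s, ∑ y ∈ s, ((w x) * (starRingEnd ℂ) (w y)).re
          = (∑ x ∈ s, ∑ y ∈ s, ((w x) * (starRingEnd ℂ) (w y))).re := by
            rw [Complex.re_sum]
            exact Finset.sum_congr rfl fun x _ => (Complex.re_sum _ _).symm
        _ = ((∑ x ∈ s, w x) * (starRingEnd ℂ) (∑ x ∈ s, w x)).re := by rw [this]
        _ = Complex.normSq (∑ x ∈ s, w x) := by rw [Complex.mul_conj]; simp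
        _ = (s.card : ℝ)^2 := hZ
    have hzero : ∑ x ∈ s, ∑ y ∈ s, Complex.normSq (w x - w y) = 0 := by
      have hterm : ∀ x ∈ s, ∀ y ∈ s, Complex.normSq (w x - w y) =
          1 + 1 - 2 * ((w x) * (starRingEnd ℂ) (w y)).re := by
        intro x hxs y hys
        rw [Complex.normSq_sub, hns x hxs, hns y hys]
      calc ∑ x ∈ s, ∑ y ∈ s, Complex.normSq (w x - w y)
          = ∑ x ∈ s, ∑ y ∈ s, (1 + 1 - 2 * ((w x) * (starRingEnd ℂ) (w y)).re) :=
            Finset.sum_congr rfl fun x hxs => Finset.sum_congr rfl fun y hys =>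
              hterm x hxs y hys
        _ = ∑ x ∈ s, ((1 + 1) * s.card - 2 * ∑ y ∈ s, ((w x) * (starRingEnd ℂ) (w y)).re) := by
            refine Finset.sum_congr rfl fun x _ => ?_
            rw [Finset.sum_sub_distrib, Finset.sum_const, ← Finset.mul_sum]
            simp
            ring
        _ = (1 + 1) * s.card * s.card - 2 * ∑ x ∈ s, ∑ y ∈ s, ((w x) * (starRingEnd ℂ) (w y)).re := by
            rw [Finset.sum_sub_distrib, Finset.sum_const, ← Finset.mul_sum]
            simp [mul_comm]
        _ = 0 := by rw [hre]; ring
    intro x hxs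
    have := (Finset.sum_eq_zero_iff_of_nonneg (fun x _ =>
      Finset.sum_nonneg (fun y _ => Complex.normSq_nonneg _))).1 hzero x hxs
    have h2 := (Finset.sum_eq_zero_iff_of_nonneg (fun y _ => Complex.normSq_nonneg _)).1 this x₀ hx
    have := Complex.normSq_eq_zero.1 h2
    exact sub_eq_zero.1 this
  · intro h
    rw [Finset.sum_congr rfl h, Finset.sum_const, nsmul_eq_mul, norm_mul,
      Complex.norm_natCast, hw x₀ hx, mul_one]

lemma exp_I_eq_one_iff (θ : ℝ) :
    Complex.exp (Complex.I * θ) = 1 ↔ ∃ n : ℤ, θ = n * (2 * Real.pi) := by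
  rw [Complex.exp_eq_one_iff]
  constructor
  · rintro ⟨n, h⟩
    have h' : Complex.I * θ = Complex.I * ((n : ℂ) * (2 * Real.pi)) := by rw [h]; ring
    have := mul_left_cancel₀ Complex.I_ne_zero h'
    exact ⟨n, by exact_mod_cast this⟩
  · rintro ⟨n, h⟩
    exact ⟨n, by rw [h]; push_cast; ring⟩

lemma exp_I_eq_neg_one_iff (θ : ℝ) :
    Complex.exp (Complex.I * θ) = -1 ↔ ∃ n : ℤ, θ = (2 * n + 1) * Real.pi := by
  have h1 : Complex.exp (Complex.I * ((θ + Real.pi : ℝ) : ℂ)) =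
      - Complex.exp (Complex.I * θ) := by
    push_cast
    rw [mul_add, Complex.exp_add, mul_comm Complex.I (Real.pi : ℂ), Complex.exp_pi_mul_I]
    ring
  constructor
  · intro h
    have h2 : Complex.exp (Complex.I * ((θ + Real.pi : ℝ) : ℂ)) = 1 := by rw [h1, h]; ring
    obtain ⟨n, hn⟩ := (exp_I_eq_one_iff _).1 h2
    exact ⟨n - 1, by push_cast; linarith⟩
  · rintro ⟨n, rfl⟩
    have h2 : Complex.exp (Complex.I * (((2 * n + 1) * Real.pi + Real.pi : ℝ) : ℂ)) = 1 :=
      (exp_I_eq_one_iff _).2 ⟨n + 1, by push_cast; ring⟩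
    rw [h1] at h2
    linear_combination -h2

lemma mul_gcd_int {α : Type*} (s : Finset α) (f : α → ℤ) (r : ℝ)
    (h : ∀ x ∈ s, ∃ n : ℤ, r * f x = n) : ∃ N : ℤ, r * s.gcd f = N := by
  classical
  induction s using Finset.induction_on with
  | empty => exact ⟨0, by simp⟩
  | @insert a s ha ih =>
    obtain ⟨p, hp⟩ := h a (Finset.mem_insert_self a s)
    obtain ⟨q, hq⟩ := ih (fun x hxs => h x (Finset.mem_insert_of_mem hxs))
    rw [Finset.gcd_insert]
    set g := s.gcd f with hg
    have hgcd : (GCDMonoid.gcd (f a) g : ℤ) = f a * Int.gcdA (f a) g + g * Int.gcdB (f a) g := by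
      rw [← Int.coe_gcd]
      exact Int.gcd_eq_gcd_ab _ _
    refine ⟨p * Int.gcdA (f a) g + q * Int.gcdB (f a) g, ?_⟩
    rw [hgcd]
    push_cast
    linear_combination (Int.gcdA (f a) g : ℝ) * hp + (Int.gcdB (f a) g : ℝ) * hq

lemma gcd_int_nonneg {α : Type*} (s : Finset α) (f : α → ℤ) : 0 ≤ s.gcd f := by
  classical
  induction s using Finset.induction_on with
  | empty => simp
  | @insert a s ha ih =>
    rw [Finset.gcd_insert, ← Int.coe_gcd]
    exact Int.natCast_nonneg _

lemma chi_abs (u : ZMod 2) : ‖chi u‖ = 1 := by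
  rcases zmod2_cases u with rfl | rfl <;> simp [chi_zero, chi_one]

lemma exp_abs (t lam : ℝ) : ‖Complex.exp (Complex.I * t * (lam : ℂ))‖ = 1 := by
  have : Complex.I * t * (lam : ℂ) = ((t * lam : ℝ) : ℂ) * Complex.I := by push_cast; ring
  rw [this, Complex.norm_exp_ofReal_mul_I]

lemma pest_iff {m : ℕ} (hm : 1 ≤ m)
    (S : Finset (Fin m → ZMod 2)) (h0 : (0 : Fin m → ZMod 2) ∉ S)
    (a b c d : Fin m → ZMod 2) (hab : a + b ∈ S)
    (hsum : a + b + c + d = 0)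
    (x₀ : Fin m → ZMod 2) (hx₀ : (c + a) ⬝ᵥ x₀ = 0 ∧ (b + a) ⬝ᵥ x₀ = 1) (t : ℝ) :
    hasPEST S a b c d t ↔ ∀ x : Fin m → ZMod 2, (a + b) ⬝ᵥ x = 1 →
      Complex.exp (Complex.I * ((t * ((lam S x₀ : ℝ) - (lam S x : ℝ)) : ℝ) : ℂ)) =
        chi ((c + a) ⬝ᵥ x) := by
  have hpne : a + b ≠ 0 := fun hc => h0 (hc ▸ hab)
  unfold hasPEST
  rw [amp S t a b c d hsum]
  set T := univ.filter (fun x : Fin m → ZMod 2 => (a + b) ⬝ᵥ x = 1) with hT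
  set w : (Fin m → ZMod 2) → ℂ :=
    fun x => chi ((c + a) ⬝ᵥ x) * Complex.exp (Complex.I * t * (lam S x : ℂ)) with hw
  have hx₀T : x₀ ∈ T := by
    rw [hT, Finset.mem_filter]
    exact ⟨Finset.mem_univ _, by rw [add_comm a b]; exact hx₀.2⟩
  have habs : ∀ x ∈ T, ‖w x‖ = 1 := by
    intro x _
    rw [hw]
    simp only [norm_mul, chi_abs, one_mul]
    exact exp_abs t _
  have hwx₀ : w x₀ = Complex.exp (Complex.I * t * (lam S x₀ : ℂ)) := by
    rw [hw]
    simp only [hx₀.1, chi_zero, one_mul]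
  -- the scalar prefactor
  have hcard : 2 * T.card = 2 ^ m := card_T hpne
  have hcardR : (T.card : ℝ) = 2 ^ m / 2 := by
    have : (2 * T.card : ℝ) = 2 ^ m := by exact_mod_cast hcard
    linarith
  have habs2 : ‖((2:ℂ)^m)⁻¹ * 2 * ∑ x ∈ T, w x‖ =
      ((2:ℝ)^m)⁻¹ * 2 * ‖∑ x ∈ T, w x‖ := by
    rw [norm_mul]
    congr 1
    have : (((2:ℂ)^m)⁻¹ * 2) = ((((2:ℝ)^m)⁻¹ * 2 : ℝ) : ℂ) := by push_cast; ring
    rw [this, Complex.norm_real, Real.norm_eq_abs, abs_of_pos (by positivity)]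
  rw [habs2]
  have hiff1 : (((2:ℝ)^m)⁻¹ * 2 * ‖∑ x ∈ T, w x‖)^2 = 1 ↔
      ‖∑ x ∈ T, w x‖ = T.card := by
    set X := ((2:ℝ)^m)⁻¹ * 2 * ‖∑ x ∈ T, w x‖ with hX
    have hXnn : 0 ≤ X := by
      have := norm_nonneg (∑ x ∈ T, w x)
      positivity
    constructor
    · intro h
      have h1 : (X - 1) * (X + 1) = 0 := by linear_combination h
      have hX1 : X = 1 := by
        rcases mul_eq_zero.1 h1 with h2 | h2
        · linarith
        · linarith
      rw [hX] at hX1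
      rw [hcardR]
      have h2m : ((2:ℝ)^m) ≠ 0 := by positivity
      field_simp at hX1 ⊢
      linarith [hX1]
    · intro h
      rw [hX, h, hcardR]
      have h2m : ((2:ℝ)^m) ≠ 0 := by positivity
      field_simp
  rw [hiff1, abs_sum_eq_card_iff T w habs x₀ hx₀T]
  have hconv : ∀ x : Fin m → ZMod 2,
      (chi ((c+a) ⬝ᵥ x) * Complex.exp (Complex.I * t * (lam S x : ℂ)) =
        Complex.exp (Complex.I * t * (lam S x₀ : ℂ))) ↔
      Complex.exp (Complex.I * ((t * ((lam S x₀ : ℝ) - (lam S x : ℝ)) : ℝ) : ℂ)) =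
        chi ((c+a) ⬝ᵥ x) := by
    intro x
    have hE : Complex.exp (Complex.I * ((t * ((lam S x₀ : ℝ) - (lam S x : ℝ)) : ℝ) : ℂ)) =
        Complex.exp (Complex.I * t * (lam S x₀ : ℂ)) /
          Complex.exp (Complex.I * t * (lam S x : ℂ)) := by
      rw [← Complex.exp_sub]
      congr 1
      push_cast
      ring
    rw [hE, div_eq_iff (Complex.exp_ne_zero _)]
    exact eq_comm
  constructor
  · intro h x hx1
    have hxT : x ∈ T := Finset.mem_filter.2 ⟨Finset.mem_univ _, hx1⟩
    have h2 := h x hxT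
    rw [hwx₀] at h2
    exact (hconv x).1 h2
  · intro h x hxT
    rw [hwx₀]
    exact (hconv x).2 (h x ((Finset.mem_filter.1 hxT).2))

end PESTaux

open PESTaux

/-- If a cubelike graph admits PEST from `(a,b)` to `(c,d)` at some positive time, then the
PEST times are exactly `(2u+1)π/M` where `M = gcd{λ_{x₀} - λ_x : (a+b)·x = 1, x ≠ x₀}`. -/
theorem hasPEST_time_iff {m : ℕ} (hm : 1 ≤ m)
    (S : Finset (Fin m → ZMod 2)) (h0 : (0 : Fin m → ZMod 2) ∉ S)
    (a b c d : Fin m → ZMod 2) (hab : a + b ∈ S) (hcd : c + d ∈ S)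
    (hbc : b ≠ c) (had : a ≠ d) (hca : c ≠ a) (hsum : a + b + c + d = 0)
    (hP : ∃ t₀ : ℝ, 0 < t₀ ∧ hasPEST S a b c d t₀)
    (x₀ : Fin m → ZMod 2) (hx₀ : (c + a) ⬝ᵥ x₀ = 0 ∧ (b + a) ⬝ᵥ x₀ = 1)
    (M : ℤ)
    (hM : M = (univ.filter (fun x : Fin m → ZMod 2 => (a + b) ⬝ᵥ x = 1 ∧ x ≠ x₀)).gcd
      (fun x => lam S x₀ - lam S x)) :
    ∀ t : ℝ, 0 < t →
      (hasPEST S a b c d t ↔ ∃ u : ℕ, t = (2 * u + 1) * Real.pi / M) := by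
  have hπ : (Real.pi : ℝ) ≠ 0 := Real.pi_ne_zero
  have hπpos := Real.pi_pos
  have hpne : a + b ≠ 0 := fun hc => h0 (hc ▸ hab)
  have hqne : c + a ≠ 0 := fun hc => hca ((addself_iff c a).1 hc)
  set δ : (Fin m → ZMod 2) → ℤ := fun x => lam S x₀ - lam S x with hδ
  set G := univ.filter (fun x : Fin m → ZMod 2 => (a + b) ⬝ᵥ x = 1 ∧ x ≠ x₀) with hG
  -- arithmetic reformulation of PEST at any time
  have hcond : ∀ s : ℝ, hasPEST S a b c d s ↔ ∀ x : Fin m → ZMod 2, (a + b) ⬝ᵥ x = 1 →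
      (((c + a) ⬝ᵥ x = 0 ∧ ∃ n : ℤ, s * (δ x : ℝ) = n * (2 * Real.pi)) ∨
       ((c + a) ⬝ᵥ x = 1 ∧ ∃ n : ℤ, s * (δ x : ℝ) = (2 * n + 1) * Real.pi)) := by
    intro s
    rw [pest_iff hm S h0 a b c d hab hsum x₀ hx₀ s]
    refine forall_congr' fun x => imp_congr_right fun hx1 => ?_
    have harg : s * ((lam S x₀ : ℝ) - (lam S x : ℝ)) = s * (δ x : ℝ) := by
      rw [hδ]; push_cast; ring
    rw [harg]
    rcases zmod2_cases ((c + a) ⬝ᵥ x) with hε | hε <;> rw [hε]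
    · rw [chi_zero, exp_I_eq_one_iff]
      constructor
      · rintro ⟨n, hn⟩
        exact Or.inl ⟨rfl, n, by linarith⟩
      · rintro (⟨_, n, hn⟩ | ⟨hc0, _⟩)
        · exact ⟨n, by linarith⟩
        · exact absurd hc0 (by decide)
    · rw [chi_one, exp_I_eq_neg_one_iff]
      constructor
      · rintro ⟨n, hn⟩
        exact Or.inr ⟨rfl, n, by linarith⟩
      · rintro (⟨hc0, _⟩ | ⟨_, n, hn⟩)
        · exact absurd hc0 (by decide)
        · exact ⟨n, by linarith⟩
  obtain ⟨t₀, ht₀pos, hPt₀⟩ := hP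
  have hC₀ := (hcond t₀).1 hPt₀
  -- the witness in Ω₋
  obtain ⟨y, hy1, hy2⟩ := exists_dot_one_one hpne hqne
  have hyne : y ≠ x₀ := by
    intro hc
    rw [hc, hx₀.1] at hy2
    exact (by decide : ¬((0 : ZMod 2) = 1)) hy2
  have hyG : y ∈ G := by
    rw [hG, Finset.mem_filter]
    exact ⟨Finset.mem_univ _, hy1, hyne⟩
  -- data at y from time t₀
  have hy₀ : ∃ n : ℤ, t₀ * (δ y : ℝ) = (2 * n + 1) * Real.pi := by
    rcases hC₀ y hy1 with ⟨hc0, _⟩ | ⟨_, n, hn⟩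
    · rw [hy2] at hc0
      exact absurd hc0 (by decide)
    · exact ⟨n, hn⟩
  obtain ⟨ny, hny⟩ := hy₀
  have hδy : δ y ≠ 0 := by
    intro hc
    rw [hc] at hny
    have h1 : ((2 * ny + 1 : ℤ) : ℝ) ≠ 0 := Int.cast_ne_zero.2 (by omega)
    have : ((2 * ny + 1 : ℤ) : ℝ) * Real.pi ≠ 0 := mul_ne_zero h1 hπ
    apply this
    push_cast
    push_cast at hny
    linarith
  -- facts about M
  have hMnn : 0 ≤ M := by rw [hM]; exact gcd_int_nonneg _ _
  have hMne : M ≠ 0 := by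
    rw [hM]
    intro hc
    exact hδy (Finset.gcd_eq_zero_iff.1 hc y hyG)
  have hMpos : 0 < M := lt_of_le_of_ne hMnn (Ne.symm hMne)
  have hMR : ((M : ℤ) : ℝ) ≠ 0 := Int.cast_ne_zero.2 hMne
  have hMRpos : (0 : ℝ) < (M : ℝ) := by exact_mod_cast hMpos
  have hdvd : ∀ x ∈ G, M ∣ δ x := by
    intro x hx
    rw [hM]
    exact Finset.gcd_dvd hx
  -- Bezout at time t₀
  have h₀ : ∀ x ∈ G, ∃ n : ℤ, (t₀ / Real.pi) * (δ x : ℝ) = n := by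
    intro x hxG
    have hx1 : (a + b) ⬝ᵥ x = 1 := ((Finset.mem_filter.1 (hG ▸ hxG)).2).1
    rcases hC₀ x hx1 with ⟨_, n, hn⟩ | ⟨_, n, hn⟩
    · refine ⟨2 * n, ?_⟩
      rw [div_mul_eq_mul_div, div_eq_iff hπ]
      push_cast
      linarith
    · refine ⟨2 * n + 1, ?_⟩
      rw [div_mul_eq_mul_div, div_eq_iff hπ]
      push_cast
      linarith
  obtain ⟨N₀, hN₀⟩ := mul_gcd_int G δ (t₀ / Real.pi) h₀
  rw [← hM] at hN₀
  -- n = N₀ * k whenever t₀ δ x = n π and δ x = M k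
  have hNk : ∀ k n : ℤ, ∀ x ∈ G, δ x = M * k → t₀ * (δ x : ℝ) = n * Real.pi → n = N₀ * k := by
    intro k n x hxG hk hn
    have hreal : (n : ℝ) * Real.pi = ((N₀ : ℝ) * k) * Real.pi := by
      calc (n : ℝ) * Real.pi = t₀ * (δ x : ℝ) := hn.symm
      _ = (t₀ / Real.pi) * (M : ℝ) * (k : ℝ) * Real.pi := by
          rw [hk]; push_cast; field_simp; try ring
      _ = ((N₀ : ℝ) * k) * Real.pi := by rw [hN₀]; try ring
    have := mul_right_cancel₀ hπ hreal
    exact_mod_cast this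
  -- N₀ is odd
  have hN₀odd : Odd N₀ := by
    obtain ⟨ky, hky⟩ := hdvd y hyG
    have h1 : (2 * ny + 1) = N₀ * ky :=
      hNk ky (2 * ny + 1) y hyG hky (by push_cast; push_cast at hny; linarith)
    have : Odd (N₀ * ky) := h1 ▸ ⟨ny, by ring⟩
    exact (Int.odd_mul.mp this).1
  -- parity of the quotients
  have hparity : ∀ x ∈ G, ∃ k : ℤ, δ x = M * k ∧
      ((c + a) ⬝ᵥ x = 0 → Even k) ∧ ((c + a) ⬝ᵥ x = 1 → Odd k) := by
    intro x hxG
    obtain ⟨k, hk⟩ := hdvd x hxG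
    have hx1 : (a + b) ⬝ᵥ x = 1 := ((Finset.mem_filter.1 (hG ▸ hxG)).2).1
    refine ⟨k, hk, ?_, ?_⟩
    · intro hε
      rcases hC₀ x hx1 with ⟨_, n, hn⟩ | ⟨hε', _⟩
      · have h1 : (2 * n) = N₀ * k := hNk k (2 * n) x hxG hk (by push_cast; push_cast at hn; linarith)
        have : Even (N₀ * k) := h1 ▸ ⟨n, by ring⟩
        rcases Int.even_mul.mp this with h2 | h2
        · exact absurd h2 (Int.not_even_iff_odd.2 hN₀odd)
        · exact h2
      · rw [hε] at hε'
        exact absurd hε' (by decide)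
    · intro hε
      rcases hC₀ x hx1 with ⟨hε', _⟩ | ⟨_, n, hn⟩
      · rw [hε] at hε'
        exact absurd hε' (by decide)
      · have h1 : (2 * n + 1) = N₀ * k :=
          hNk k (2 * n + 1) x hxG hk (by push_cast; push_cast at hn; linarith)
        have : Odd (N₀ * k) := h1 ▸ ⟨n, by ring⟩
        exact (Int.odd_mul.mp this).2
  -- main equivalence
  intro t htpos
  rw [hcond t]
  constructor
  · -- PEST condition at t implies t has the required form
    intro hC
    have h' : ∀ x ∈ G, ∃ n : ℤ, (t / Real.pi) * (δ x : ℝ) = n := by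
      intro x hxG
      have hx1 : (a + b) ⬝ᵥ x = 1 := ((Finset.mem_filter.1 (hG ▸ hxG)).2).1
      rcases hC x hx1 with ⟨_, n, hn⟩ | ⟨_, n, hn⟩
      · refine ⟨2 * n, ?_⟩
        rw [div_mul_eq_mul_div, div_eq_iff hπ]
        push_cast
        linarith
      · refine ⟨2 * n + 1, ?_⟩
        rw [div_mul_eq_mul_div, div_eq_iff hπ]
        push_cast
        linarith
    obtain ⟨N, hN⟩ := mul_gcd_int G δ (t / Real.pi) h'
    rw [← hM] at hN
    -- N odd via witness y
    have hNodd : Odd N := by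
      obtain ⟨ky, hky⟩ := hdvd y hyG
      have hny' : ∃ n : ℤ, t * (δ y : ℝ) = (2 * n + 1) * Real.pi := by
        rcases hC y hy1 with ⟨hc0, _⟩ | ⟨_, n, hn⟩
        · rw [hy2] at hc0
          exact absurd hc0 (by decide)
        · exact ⟨n, hn⟩
      obtain ⟨n, hn⟩ := hny'
      have hreal : ((2 * n + 1 : ℤ) : ℝ) * Real.pi = ((N : ℝ) * ky) * Real.pi := by
        calc ((2 * n + 1 : ℤ) : ℝ) * Real.pi = t * (δ y : ℝ) := by push_cast; linarith
        _ = (t / Real.pi) * (M : ℝ) * (ky : ℝ) * Real.pi := by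
            rw [hky]; push_cast; field_simp; try ring
        _ = ((N : ℝ) * ky) * Real.pi := by rw [hN]; try ring
      have h2 := mul_right_cancel₀ hπ hreal
      have h3 : (2 * n + 1) = N * ky := by exact_mod_cast h2
      have : Odd (N * ky) := h3 ▸ ⟨n, by ring⟩
      exact (Int.odd_mul.mp this).1
    have hNpos : 0 < N := by
      have h1 : (0 : ℝ) < (t / Real.pi) * (M : ℝ) := by positivity
      rw [hN] at h1
      exact_mod_cast h1
    obtain ⟨l, hl⟩ := hNodd
    have hl0 : 0 ≤ l := by omega
    refine ⟨l.toNat, ?_⟩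
    have hNt : t = (N : ℝ) * Real.pi / (M : ℝ) := by
      rw [div_mul_eq_mul_div, div_eq_iff hπ] at hN
      field_simp
      try linarith
    have hlr : ((l.toNat : ℕ) : ℝ) = (l : ℝ) := by
      rw [← Int.cast_natCast, Int.toNat_of_nonneg hl0]
    rw [hNt, hl]
    push_cast
    rw [hlr]
    try ring
  · -- times of the required form give PEST
    rintro ⟨u, rfl⟩
    intro x hx1
    by_cases hxx : x = x₀
    · have h1 : (c + a) ⬝ᵥ x = 0 := by rw [hxx]; exact hx₀.1
      have h2 : δ x = 0 := by rw [hxx]; show lam S x₀ - lam S x₀ = 0; ring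
      refine Or.inl ⟨h1, 0, ?_⟩
      rw [h2]
      simp
    · have hxG : x ∈ G := by
        rw [hG, Finset.mem_filter]
        exact ⟨Finset.mem_univ _, hx1, hxx⟩
      obtain ⟨k, hk, hkeven, hkodd⟩ := hparity x hxG
      have htδ : (2 * (u : ℝ) + 1) * Real.pi / (M : ℝ) * (δ x : ℝ) =
          ((2 * (u : ℤ) + 1) * k : ℤ) * Real.pi := by
        rw [hk]
        push_cast
        field_simp
      rcases zmod2_cases ((c + a) ⬝ᵥ x) with hε | hε
      · obtain ⟨k', hk'⟩ := hkeven hε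
        refine Or.inl ⟨hε, (2 * (u : ℤ) + 1) * k', ?_⟩
        rw [htδ, hk']
        push_cast
        ring
      · obtain ⟨k', hk'⟩ := hkodd hε
        refine Or.inr ⟨hε, 2 * (u : ℤ) * k' + u + k', ?_⟩
        rw [htδ, hk']
        push_cast
        ring

end
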